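/- Stein's theorem: every countable torsion-free abelian group G decomposes as G = F ⊕ H where F is free and Hom(H, ℤ) = 0. -/

import Mathlib

namespace Paper

open DirectSum

/-- A subgroup is a direct summand. -/
def IsSummand {G : Type*} [AddCommGroup G] (A : AddSubgroup G) : Prop :=
  ∃ B : AddSubgroup G, IsCompl A B

/-- A group has rank one: it is nonzero and embeds in `ℚ`. -/
def IsRankOne (G : Type*) [AddCommGroup G] : Prop :=
  (∃ x : G, x ≠ 0) ∧ ∃ f : G →+ ℚ, Function.Injective f

/-- A group is clipped if it has no rank-one direct summand. -/
def IsClipped (G : Type*) [AddCommGroup G] : Prop :=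
  ¬ ∃ A : AddSubgroup G, IsSummand A ∧ IsRankOne A

/-- A group is `τ`-clipped if it has no direct summand isomorphic to the
rank-one group `τ` (a subgroup of `ℚ` representing a type). -/
def IsClippedFor (G : Type*) [AddCommGroup G] (τ : AddSubgroup ℚ) : Prop :=
  ¬ ∃ A : AddSubgroup G, IsSummand A ∧ Nonempty (A ≃+ τ)

/-- A group is completely decomposable if it is a direct sum of rank-one
groups (nonzero subgroups of `ℚ`). -/
def IsCompletelyDecomposable (G : Type*) [AddCommGroup G] : Prop :=
  ∃ (ι : Type) (τ : ι → AddSubgroup ℚ), (∀ i, τ i ≠ ⊥) ∧ Nonempty (G ≃+ ⨁ i, τ i)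

/-- A group is `τ`-homogeneous completely decomposable if it is a direct sum
of copies of the rank-one group `τ`. -/
def IsHomogeneousCD (G : Type*) [AddCommGroup G] (τ : AddSubgroup ℚ) : Prop :=
  τ ≠ ⊥ ∧ ∃ ι : Type, Nonempty (G ≃+ ⨁ _i : ι, τ)

/-- Two groups are mono-equivalent if each embeds into the other. -/
def MonoEquiv (G H : Type*) [AddCommGroup G] [AddCommGroup H] : Prop :=
  (∃ f : G →+ H, Function.Injective f) ∧ (∃ f : H →+ G, Function.Injective f)

/-- A subgroup is pure if `n • x ∈ H` implies `n • x ∈ n • H`. -/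
def IsPure {G : Type*} [AddCommGroup G] (H : AddSubgroup G) : Prop :=
  ∀ (n : ℤ) (x : G), n • x ∈ H → ∃ y ∈ H, n • y = n • x

/-- A group is strongly separable if every pure rank-one subgroup is a
direct summand. -/
def StronglySeparable (G : Type*) [AddCommGroup G] : Prop :=
  ∀ H : AddSubgroup G, IsPure H → IsRankOne H → IsSummand H

/-- The pure closure of an element: all `x` with `n • x` a multiple of `g`
for some `n ≠ 0`. -/
def pureClosure {G : Type*} [AddCommGroup G] (g : G) : AddSubgroup G where
  carrier := {x | ∃ n : ℤ, n ≠ 0 ∧ n • x ∈ AddSubgroup.zmultiples g}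
  zero_mem' := ⟨1, one_ne_zero, by simpa using (AddSubgroup.zmultiples g).zero_mem⟩
  add_mem' := by
    rintro x y ⟨n, hn, hx⟩ ⟨m, hm, hy⟩
    refine ⟨n * m, mul_ne_zero hn hm, ?_⟩
    have h : (n * m) • (x + y) = m • (n • x) + n • (m • y) := by
      rw [smul_add, mul_smul, mul_smul, smul_comm n m x]
    rw [h]
    exact add_mem (AddSubgroup.zsmul_mem _ hx m) (AddSubgroup.zsmul_mem _ hy n)
  neg_mem' := by
    rintro x ⟨n, hn, hx⟩
    exact ⟨n, hn, by rw [smul_neg]; exact neg_mem hx⟩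

/-- A group is indecomposable if it is nonzero and has no nontrivial
direct sum decomposition. -/
def IsIndecomposableGroup (G : Type*) [AddCommGroup G] : Prop :=
  (∃ x : G, x ≠ 0) ∧ ∀ A B : AddSubgroup G, IsCompl A B → A = ⊥ ∨ B = ⊥


section SteinAux

open Submodule

variable {Q : Type*} [AddCommGroup Q]

/-- Saturation (pure closure) of a submodule. -/
def pclo (S : Submodule ℤ Q) : Submodule ℤ Q where
  carrier := {x | ∃ n : ℤ, n ≠ 0 ∧ n • x ∈ S}
  zero_mem' := ⟨1, one_ne_zero, by simpa using S.zero_mem⟩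
  add_mem' := by
    rintro x y ⟨n, hn, hx⟩ ⟨m, hm, hy⟩
    refine ⟨n * m, mul_ne_zero hn hm, ?_⟩
    have h : (n * m) • (x + y) = m • (n • x) + n • (m • y) := by
      rw [smul_add, mul_smul, mul_smul, smul_comm n m x]
    rw [h]
    exact add_mem (S.smul_mem _ hx) (S.smul_mem _ hy)
  smul_mem' := by
    rintro c x ⟨n, hn, hx⟩
    exact ⟨n, hn, by rw [smul_comm]; exact S.smul_mem _ hx⟩

lemma le_pclo (S : Submodule ℤ Q) : S ≤ pclo S :=
  fun x hx => ⟨1, one_ne_zero, by simpa using hx⟩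

lemma pclo_mono {S T : Submodule ℤ Q} (h : S ≤ T) : pclo S ≤ pclo T := by
  rintro x ⟨n, hn, hx⟩; exact ⟨n, hn, h hx⟩

lemma pclo_sat {S : Submodule ℤ Q} {a : ℤ} {x : Q} (ha : a ≠ 0) (h : a • x ∈ pclo S) :
    x ∈ pclo S := by
  obtain ⟨n, hn, hx⟩ := h
  exact ⟨n * a, mul_ne_zero hn ha, by rwa [mul_smul]⟩

/-- If `C₁ ≤ C₂` are submodules with `C₁` saturated and `C₂` finitely generated
(torsion-free ambient), then `C₁` has a complement in `C₂`. -/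
lemma exists_compl_of_sat [NoZeroSMulDivisors ℤ Q] (C₁ C₂ : Submodule ℤ Q)
    (h12 : C₁ ≤ C₂) (hfin : Module.Finite ℤ C₂)
    (hsat : ∀ (a : ℤ) (x : Q), a ≠ 0 → a • x ∈ C₁ → x ∈ C₁) :
    ∃ D : Submodule ℤ Q, D ≤ C₂ ∧ C₁ ⊓ D = ⊥ ∧ C₁ ⊔ D = C₂ ∧ Module.Free ℤ D := by
  classical
  haveI := hfin
  set C' : Submodule ℤ C₂ := C₁.comap C₂.subtype with hC'
  haveI : NoZeroSMulDivisors ℤ (C₂ ⧸ C') := by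
    refine ⟨fun {a t} h => ?_⟩
    by_cases ha : a = 0
    · exact Or.inl ha
    · right
      obtain ⟨x, rfl⟩ := Submodule.mkQ_surjective C' t
      have h1 : C'.mkQ (a • x) = 0 := by rw [map_smul]; exact h
      rw [Submodule.mkQ_apply, Submodule.Quotient.mk_eq_zero] at h1
      have h2 : a • (x : Q) ∈ C₁ := h1
      have h3 : (x : Q) ∈ C₁ := hsat a x ha h2
      rw [Submodule.mkQ_apply, Submodule.Quotient.mk_eq_zero]
      exact h3
  haveI : Module.Free ℤ (C₂ ⧸ C') := Module.free_of_finite_type_torsion_free'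
  obtain ⟨σ, hσ⟩ := Module.projective_lifting_property C'.mkQ LinearMap.id
    (Submodule.mkQ_surjective C')
  have hσ' : ∀ t, C'.mkQ (σ t) = t := fun t => by
    have h := LinearMap.ext_iff.mp hσ t
    simpa using h
  set f : (C₂ ⧸ C') →ₗ[ℤ] Q := C₂.subtype ∘ₗ σ with hf
  have hσinj : Function.Injective σ := by
    intro a b hab
    have := congrArg C'.mkQ hab
    rwa [hσ' a, hσ' b] at this
  have hfinj : Function.Injective f := by
    intro a b hab
    exact hσinj (Subtype.ext hab)
  refine ⟨LinearMap.range f, ?_, ?_, ?_, ?_⟩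
  · rintro x ⟨t, rfl⟩
    exact (σ t).2
  · rw [eq_bot_iff]
    rintro x ⟨hx1, t, rfl⟩
    have : σ t ∈ C' := hx1
    have ht : t = 0 := by
      rw [← hσ' t, Submodule.mkQ_apply, Submodule.Quotient.mk_eq_zero]
      exact this
    simp [ht]
  · apply le_antisymm
    · exact sup_le h12 (by rintro x ⟨t, rfl⟩; exact (σ t).2)
    · intro x hx
      set y := σ (C'.mkQ ⟨x, hx⟩) with hy
      have hmem : x - (y : Q) ∈ C₁ := by
        have : (⟨x, hx⟩ - y : C₂) ∈ C' := by
          rw [← Submodule.Quotient.mk_eq_zero, ← Submodule.mkQ_apply, map_sub, hσ']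
          simp
        exact this
      apply Submodule.mem_sup.mpr
      exact ⟨x - (y : Q), hmem, (y : Q), ⟨C'.mkQ ⟨x, hx⟩, rfl⟩, by abel⟩
  · exact Module.Free.of_equiv (LinearEquiv.ofInjective f hfinj)

/-- A countable `ℤ`-module whose points are separated by homomorphisms to `ℤ`
is free. -/
theorem free_of_countable_sep (Q : Type*) [AddCommGroup Q] [Countable Q]
    (hsep : ∀ q : Q, q ≠ 0 → ∃ φ : Q →ₗ[ℤ] ℤ, φ q ≠ 0) : Module.Free ℤ Q := by
  classical
  haveI : NoZeroSMulDivisors ℤ Q := by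
    refine ⟨fun {a x} h => ?_⟩
    by_cases ha : a = 0
    · exact Or.inl ha
    right
    by_contra hx
    obtain ⟨φ, hφ⟩ := hsep x hx
    have h2 : a • φ x = 0 := by rw [← map_smul, h, map_zero]
    rcases smul_eq_zero.mp h2 with h3 | h3
    · exact ha h3
    · exact hφ h3
  obtain ⟨e, he⟩ := exists_surjective_nat Q
  set C : ℕ → Submodule ℤ Q := fun n => pclo (span ℤ (e '' {i | i < n})) with hC
  have hCmono : Monotone C := fun m n h =>
    pclo_mono (span_mono (Set.image_mono fun i hi => lt_of_lt_of_le hi h))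
  have hCsat : ∀ (n : ℕ) (a : ℤ) (x : Q), a ≠ 0 → a • x ∈ C n → x ∈ C n :=
    fun n a x ha h => pclo_sat ha h
  have hss : ∀ n : ℕ, {i : ℕ | i < n + 1} = insert n {i : ℕ | i < n} := by
    intro n; ext i; simp [Set.mem_insert_iff]; omega
  have hdec : ∀ (n : ℕ) (x : Q), x ∈ C (n + 1) →
      ∃ (a t : ℤ) (c : Q), a ≠ 0 ∧ c ∈ span ℤ (e '' {i | i < n}) ∧ a • x = t • e n + c := by
    intro n x hx
    obtain ⟨a, ha, hax⟩ := hx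
    rw [hss, Set.image_insert_eq] at hax
    obtain ⟨t, c, hc, hEq⟩ := Submodule.mem_span_insert.mp hax
    exact ⟨a, t, c, ha, hc, hEq⟩
  -- finitely many functionals separate each C n
  have sepA : ∀ n : ℕ, ∃ (k : ℕ) (φ : Fin k → (Q →ₗ[ℤ] ℤ)),
      ∀ x ∈ C n, (∀ j, φ j x = 0) → x = 0 := by
    intro n
    induction n with
    | zero =>
      refine ⟨0, Fin.elim0, fun x hx _ => ?_⟩
      obtain ⟨a, ha, hax⟩ := hx
      have hempty : (e '' {i : ℕ | i < 0}) = ∅ := by simp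
      rw [hempty, span_empty, Submodule.mem_bot] at hax
      rcases smul_eq_zero.mp hax with h | h
      · exact absurd h ha
      · exact h
    | succ n ih =>
      obtain ⟨k, φ, hφ⟩ := ih
      by_cases hK : ∀ x ∈ C (n + 1), (∀ j, φ j x = 0) → x = 0
      · exact ⟨k, φ, hK⟩
      push_neg at hK
      obtain ⟨x₀, hx₀C, hx₀φ, hx₀⟩ := hK
      obtain ⟨ψ, hψ⟩ := hsep x₀ hx₀
      refine ⟨k + 1, Fin.cons ψ φ, ?_⟩
      intro x hxC hall
      have hψx : ψ x = 0 := by simpa using hall 0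
      have hφx : ∀ j, φ j x = 0 := fun j => by simpa using hall j.succ
      obtain ⟨a, t, c, ha, hc, hEq⟩ := hdec n x hxC
      obtain ⟨b, t', c', hb, hc', hEq'⟩ := hdec n x₀ hx₀C
      have hcomb : (t' * a) • x - (t * b) • x₀ = t' • c - t • c' := by
        calc (t' * a) • x - (t * b) • x₀
            = t' • (a • x) - t • (b • x₀) := by rw [mul_smul, mul_smul]
          _ = t' • (t • e n + c) - t • (t' • e n + c') := by rw [hEq, hEq']
          _ = t' • c - t • c' := by rw [smul_add, smul_add, smul_comm t' t]; abel
      have hmem : (t' * a) • x - (t * b) • x₀ ∈ C n := by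
        rw [hcomb]
        exact le_pclo _ (sub_mem (smul_mem _ _ hc) (smul_mem _ _ hc'))
      have hzero : (t' * a) • x - (t * b) • x₀ = 0 := by
        apply hφ _ hmem
        intro j
        rw [map_sub, map_smul, map_smul, hφx j, hx₀φ j]
        simp
      have heq2 : (t' * a) • x = (t * b) • x₀ := sub_eq_zero.mp hzero
      have htb : t * b = 0 := by
        have h5 := congrArg ψ heq2
        rw [map_smul, map_smul, hψx, smul_zero] at h5
        rcases smul_eq_zero.mp h5.symm with h | h
        · exact h
        · exact absurd h hψ
      have ht : t = 0 := by
        rcases mul_eq_zero.mp htb with h | h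
        · exact h
        · exact absurd h hb
      have hxn : x ∈ C n := by
        apply hCsat n a x ha
        rw [hEq, ht, zero_smul, zero_add]
        exact le_pclo _ hc
      exact hφ x hxn hφx
  -- each C n is finitely generated
  have hCfin : ∀ n, Module.Finite ℤ (C n) := by
    intro n
    obtain ⟨k, φ, hφ⟩ := sepA n
    set f : C n →ₗ[ℤ] (Fin k → ℤ) := LinearMap.pi (fun j => (φ j).comp (C n).subtype) with hfdef
    have hinj : Function.Injective f := by
      intro x y hxy
      have hx' : ∀ j, φ j ((x : Q) - (y : Q)) = 0 := by
        intro j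
        have h6 := congrFun hxy j
        simp only [hfdef, LinearMap.pi_apply, LinearMap.comp_apply,
          Submodule.coe_subtype] at h6
        rw [map_sub, h6, sub_self]
      have hmem : ((x : Q) - (y : Q)) ∈ C n := sub_mem x.2 y.2
      exact Subtype.ext (sub_eq_zero.mp (hφ _ hmem hx'))
    haveI := isNoetherian_of_injective f hinj
    infer_instance
  -- complements D n with C n ⊔ D n = C (n+1)
  have hDex : ∀ n, ∃ D : Submodule ℤ Q, D ≤ C (n + 1) ∧ C n ⊓ D = ⊥ ∧
      C n ⊔ D = C (n + 1) ∧ Module.Free ℤ D :=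
    fun n => exists_compl_of_sat (C n) (C (n + 1)) (hCmono (Nat.le_succ n))
      (hCfin (n + 1)) (fun a x => hCsat n a x)
  choose D hD1 hD2 hD3 hD4 using hDex
  have hC0 : C 0 = ⊥ := by
    rw [eq_bot_iff]
    rintro x ⟨a, ha, hax⟩
    have hempty : (e '' {i : ℕ | i < 0}) = ∅ := by simp
    rw [hempty, span_empty, Submodule.mem_bot] at hax
    rcases smul_eq_zero.mp hax with h | h
    · exact absurd h ha
    · simpa [Submodule.mem_bot] using h
  have hCsup : ∀ n : ℕ, (Finset.range n).sup D = C n := by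
    intro n
    induction n with
    | zero => simpa using hC0.symm
    | succ n ih =>
      rw [Finset.range_add_one, Finset.sup_insert, ih, sup_comm]
      exact hD3 n
  have hDle : ∀ {m n : ℕ}, m < n → D m ≤ C n :=
    fun {m n} h => (hD1 m).trans (hCmono h)
  -- C k is disjoint from the sup of D m for k ≤ m
  have hL : ∀ (k j : ℕ), C k ⊓ (Finset.Ico k (k + j)).sup D = ⊥ := by
    intro k j
    induction j with
    | zero => simp
    | succ j ih =>
      rw [eq_bot_iff]
      intro x hx
      obtain ⟨hxC, hxE⟩ := Submodule.mem_inf.mp hx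
      rw [show k + (j + 1) = (k + j) + 1 from rfl,
        Nat.Ico_succ_right_eq_insert_Ico (Nat.le_add_right k j),
        Finset.sup_insert] at hxE
      obtain ⟨d, hd, y, hy, hsum⟩ := Submodule.mem_sup.mp hxE
      have hyC : y ∈ C (k + j) := by
        refine (Finset.sup_le fun m hm => ?_ : (Finset.Ico k (k + j)).sup D ≤ C (k + j)) hy
        exact hDle (Finset.mem_Ico.mp hm).2
      have hdC : d ∈ C (k + j) := by
        have : d = x - y := by rw [← hsum]; abel
        rw [this]
        exact sub_mem (hCmono (Nat.le_add_right k j) hxC) hyC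
      have hd0 : d = 0 := by
        have : d ∈ C (k + j) ⊓ D (k + j) := ⟨hdC, hd⟩
        rwa [hD2, Submodule.mem_bot] at this
      have hxy : x = y := by rw [← hsum, hd0, zero_add]
      have : x ∈ C k ⊓ (Finset.Ico k (k + j)).sup D := ⟨hxC, hxy ▸ hy⟩
      rwa [ih, Submodule.mem_bot] at this
  have hind : iSupIndep D := by
    intro n
    rw [Submodule.disjoint_def]
    intro x hxD hxS
    rw [iSup_subtype'] at hxS
    obtain ⟨s, hs⟩ := Submodule.mem_iSup_iff_exists_finset.mp hxS
    set N : ℕ := (n + 1) + s.sup (fun j => (j : ℕ)) with hN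
    have hb : (⨆ j ∈ s, D ((j : {j // j ≠ n}) : ℕ)) ≤
        C n ⊔ (Finset.Ico (n + 1) N).sup D := by
      refine iSup₂_le fun j hj => ?_
      rcases lt_or_gt_of_ne j.2 with hlt | hgt
      · exact le_sup_of_le_left (hDle hlt)
      · refine le_sup_of_le_right (Finset.le_sup ?_)
        rw [Finset.mem_Ico]
        refine ⟨hgt, ?_⟩
        have : (j : ℕ) ≤ s.sup (fun j => (j : ℕ)) := Finset.le_sup hj
        omega
    have hx2 := hb hs
    obtain ⟨y, hy, z, hz, hsum⟩ := Submodule.mem_sup.mp hx2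
    have hzC : z ∈ C (n + 1) := by
      have hxC : x ∈ C (n + 1) := hD1 n hxD
      have : z = x - y := by rw [← hsum]; abel
      rw [this]
      exact sub_mem hxC (hCmono (Nat.le_succ n) hy)
    have hz0 : z = 0 := by
      have : z ∈ C (n + 1) ⊓ (Finset.Ico (n + 1) ((n + 1) + s.sup (fun j => (j : ℕ)))).sup D :=
        ⟨hzC, hz⟩
      rwa [hL, Submodule.mem_bot] at this
    have hxy : x = y := by rw [← hsum, hz0, add_zero]
    have : x ∈ C n ⊓ D n := ⟨hxy ▸ hy, hxD⟩
    rwa [hD2, Submodule.mem_bot] at this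
  have htop : ⨆ n, D n = ⊤ := by
    rw [eq_top_iff]
    intro q _
    obtain ⟨i, rfl⟩ := he q
    have h1 : e i ∈ C (i + 1) :=
      le_pclo _ (subset_span ⟨i, by simp, rfl⟩)
    have h2 : C (i + 1) ≤ ⨆ n, D n := by
      rw [← hCsup (i + 1)]
      exact Finset.sup_le fun m _ => le_iSup D m
    exact h2 h1
  have hInt : DirectSum.IsInternal D :=
    DirectSum.isInternal_submodule_of_iSupIndep_of_iSup_eq_top hind htop
  letI : ∀ n, Module.Free ℤ (D n) := hD4
  exact Module.Free.of_basis (hInt.collectedBasis (fun n => Module.Free.chooseBasis ℤ (D n)))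

end SteinAux


/-- Stein: every countable torsion-free abelian group
decomposes as `F ⊕ H` with `F` free and `Hom(H, ℤ) = 0`. -/
theorem statement12 (G : Type*) [AddCommGroup G] [Countable G]
    [NoZeroSMulDivisors ℤ G] :
    ∃ F H : AddSubgroup G, IsCompl F H ∧ Module.Free ℤ F ∧
      ∀ f : H →+ ℤ, f = 0 := by
  classical
  haveI : ∀ (S : Submodule ℤ G), Countable (G ⧸ S) := fun S =>
    (Submodule.mkQ_surjective S).countable
  set Hs : Submodule ℤ G := ⨅ (f : G →ₗ[ℤ] ℤ), LinearMap.ker f with hHs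
  have hsep : ∀ q : G ⧸ Hs, q ≠ 0 → ∃ φ : (G ⧸ Hs) →ₗ[ℤ] ℤ, φ q ≠ 0 := by
    intro q hq
    obtain ⟨g, rfl⟩ := Submodule.mkQ_surjective Hs q
    have hg : g ∉ Hs := by
      intro h
      exact hq (by rwa [Submodule.mkQ_apply, Submodule.Quotient.mk_eq_zero])
    rw [hHs, Submodule.mem_iInf] at hg
    push_neg at hg
    obtain ⟨f, hf⟩ := hg
    refine ⟨Hs.liftQ f (hHs ▸ iInf_le _ f), ?_⟩
    rw [Submodule.mkQ_apply, Submodule.liftQ_apply]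
    exact fun h => hf (LinearMap.mem_ker.mpr h)
  haveI hQfree : Module.Free ℤ (G ⧸ Hs) := free_of_countable_sep _ hsep
  obtain ⟨s, hs⟩ := Module.projective_lifting_property Hs.mkQ
    (LinearMap.id (M := G ⧸ Hs)) (Submodule.mkQ_surjective Hs)
  have hsec : ∀ q, Hs.mkQ (s q) = q := fun q => by
    have h := LinearMap.ext_iff.mp hs q
    simpa using h
  refine ⟨(LinearMap.range s).toAddSubgroup, Hs.toAddSubgroup, ⟨?_, ?_⟩, ?_, ?_⟩
  · rw [AddSubgroup.disjoint_def]
    intro x hx hxH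
    rw [Submodule.mem_toAddSubgroup] at hx hxH
    obtain ⟨q, rfl⟩ := hx
    have hq : q = 0 := by
      rw [← hsec q, Submodule.mkQ_apply, Submodule.Quotient.mk_eq_zero]
      exact hxH
    rw [hq, map_zero]
  · rw [codisjoint_iff, eq_top_iff]
    intro g _
    have h1 : g - s (Hs.mkQ g) ∈ Hs := by
      rw [← Submodule.Quotient.mk_eq_zero, ← Submodule.mkQ_apply, map_sub, hsec]
      simp
    exact AddSubgroup.mem_sup.mpr ⟨s (Hs.mkQ g), (Submodule.mem_toAddSubgroup _).mpr ⟨_, rfl⟩,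
      g - s (Hs.mkQ g), (Submodule.mem_toAddSubgroup _).mpr h1, by abel⟩
  · refine Module.Free.of_equiv (R := ℤ) (R' := ℤ) (σ := RingHom.id ℤ) (σ' := RingHom.id ℤ) (M := G ⧸ Hs) ?_
    exact AddEquiv.toIntLinearEquiv
      { toFun := fun q => ⟨s q, (Submodule.mem_toAddSubgroup _).mpr ⟨q, rfl⟩⟩
        invFun := fun x => Hs.mkQ x.1
        left_inv := fun q => hsec q
        right_inv := fun x => by
          obtain ⟨q, hq⟩ := (Submodule.mem_toAddSubgroup _).mp x.2
          apply Subtype.ext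
          simp only
          rw [← hq, hsec]
        map_add' := fun a b => by
          apply Subtype.ext
          simp [map_add] }
  · intro f
    have hmem : ∀ g : G, g - s (Hs.mkQ g) ∈ Hs.toAddSubgroup := by
      intro g
      rw [Submodule.mem_toAddSubgroup, ← Submodule.Quotient.mk_eq_zero, ← Submodule.mkQ_apply,
        map_sub, hsec]
      simp
    set ρ : G →+ ℤ := AddMonoidHom.mk' (fun g => f ⟨g - s (Hs.mkQ g), hmem g⟩) (by
      intro a b
      rw [← map_add]
      congr 1
      apply Subtype.ext
      simp only [AddSubgroup.coe_add]
      rw [map_add, map_add]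
      abel) with hρ
    have hvan : ∀ h : G, h ∈ Hs → ρ h = 0 := by
      intro h hh
      rw [hHs, Submodule.mem_iInf] at hh
      have := hh ρ.toIntLinearMap
      exact this
    ext x
    obtain ⟨h, hh⟩ := x
    have hh' : h ∈ Hs := (Submodule.mem_toAddSubgroup _).mp hh
    have h0 : Hs.mkQ h = 0 := by rwa [Submodule.mkQ_apply, Submodule.Quotient.mk_eq_zero]
    have hv := hvan h hh'
    rw [hρ] at hv
    simp only [AddMonoidHom.mk'_apply] at hv
    have heq : (⟨h - s (Hs.mkQ h), hmem h⟩ : Hs.toAddSubgroup) = ⟨h, hh⟩ := by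
      apply Subtype.ext
      simp only
      rw [h0, map_zero, sub_zero]
    rw [heq] at hv
    simpa using hv

end Paper
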